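/- Let d ≥ 1 and let G be a d-degenerate finite simple graph with n vertices and m ≥ C(d,2) edges. Then c(G) ≤ n + (2^d − 1)·m/d − ((d − 3)·2^d + d + 1)/2; equivalently, 2d·c(G) ≤ 2d·n + 2(2^d − 1)·m − d·((d − 3)·2^d + d + 1). -/

import Mathlib

set_option maxHeartbeats 1000000

open Finset

/-- The number of cliques (sets of pairwise adjacent vertices, including the
empty clique) of a graph. -/
noncomputable def cliqueCount {V : Type*} (G : SimpleGraph V) : ℕ :=
  Nat.card {s : Finset V // G.IsClique (s : Set V)}

/-- A graph is `d`-degenerate if every nonempty set of vertices contains a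
vertex with at most `d` neighbours in that set. -/
def IsDegenerate {V : Type*} (G : SimpleGraph V) (d : ℕ) : Prop :=
  ∀ S : Finset V, S.Nonempty → ∃ v ∈ S, Nat.card {u ∈ (S : Set V) | G.Adj v u} ≤ d

namespace CliqueDeg

attribute [local instance] Classical.propDecidable

variable {V : Type*} (G : SimpleGraph V)

/-- number of cliques of size at least 2 inside `S` -/
noncomputable def big (S : Finset V) : ℕ :=
  (S.powerset.filter fun t : Finset V => 2 ≤ t.card ∧ G.IsClique (t : Set V)).card

/-- number of edges inside `S` (as 2-element cliques) -/
noncomputable def ec (S : Finset V) : ℕ :=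
  (S.powerset.filter fun t : Finset V => t.card = 2 ∧ G.IsClique (t : Set V)).card

/-- degree of `v` inside `S` -/
noncomputable def dg (S : Finset V) (v : V) : ℕ := (S.filter fun u => G.Adj v u).card

lemma lemC {t s : ℕ} (h : t ≤ s) : s * 2 ^ t + t ≤ t * 2 ^ s + s := by
  induction s, h using Nat.le_induction with
  | base => omega
  | succ s hts ih =>
    have h1 : 2 ^ t ≤ 2 ^ s := Nat.pow_le_pow_right (by norm_num) hts
    have h2 : t = 0 ∨ 1 ≤ t := by omega
    have h4 : t * 2 ^ (s + 1) = t * 2 ^ s + t * 2 ^ s := by ring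
    have h5 : (s + 1) * 2 ^ t = s * 2 ^ t + 2 ^ t := by ring
    rcases h2 with h2 | h2
    · subst h2; simpa using Nat.one_le_two_pow
    · have h3 : 1 * 2 ^ s ≤ t * 2 ^ s := Nat.mul_le_mul_right _ h2
      omega

lemma lemCZ {t s : ℕ} (h : t ≤ s) : (s : ℤ) * (2 ^ t - 1) ≤ t * (2 ^ s - 1) := by
  have := lemC h
  have := @Nat.cast_le ℤ _ _ _ |>.2 this
  push_cast at this
  ring_nf
  ring_nf at this
  linarith


variable {G}

lemma filter_powerset_erase (S : Finset V) (v : V) (p : Finset V → Prop) :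
    (S.erase v).powerset.filter p = S.powerset.filter (fun t => p t ∧ v ∉ t) := by
  ext t
  simp only [mem_filter, mem_powerset, Finset.subset_erase]
  tauto

lemma ec_erase (S : Finset V) (v : V) (hv : v ∈ S) :
    ec G S = ec G (S.erase v) + dg G S v := by
  have hsplit := Finset.card_filter_add_card_filter_not
    (s := S.powerset.filter fun t : Finset V => t.card = 2 ∧ G.IsClique (t : Set V))
    (p := fun t : Finset V => v ∈ t)
  rw [Finset.filter_filter, Finset.filter_filter] at hsplit
  have hA : (S.powerset.filter fun t : Finset V => (t.card = 2 ∧ G.IsClique (t : Set V)) ∧ v ∉ t)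
      = (S.erase v).powerset.filter (fun t : Finset V => t.card = 2 ∧ G.IsClique (t : Set V)) := by
    ext t
    simp only [mem_filter, mem_powerset, Finset.subset_erase]
    tauto
  have hB : (S.powerset.filter fun t : Finset V => (t.card = 2 ∧ G.IsClique (t : Set V)) ∧ v ∈ t)
      = (S.filter fun u => G.Adj v u).image (fun u => ({v, u} : Finset V)) := by
    ext t
    simp only [mem_filter, mem_powerset, mem_image]
    constructor
    · rintro ⟨htS, ⟨hcard, hclq⟩, hvt⟩
      obtain ⟨a, b, hab, rfl⟩ := Finset.card_eq_two.mp hcard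
      rcases Finset.mem_insert.mp hvt with h | hvb
      · subst h
        refine ⟨b, ?_, rfl⟩
        have hadj : G.Adj v b := hclq (by simp) (by simp) hab
        exact ⟨htS (by simp), hadj⟩
      · have h := Finset.mem_singleton.mp hvb
        subst h
        refine ⟨a, ?_, by rw [Finset.pair_comm]⟩
        have hadj : G.Adj v a := hclq (by simp) (by simp) hab.symm
        exact ⟨htS (by simp), hadj⟩
    · rintro ⟨u, hu, rfl⟩
      obtain ⟨huS, hadj⟩ := hu
      refine ⟨?_, ⟨Finset.card_pair hadj.ne, ?_⟩, by simp⟩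
      · exact Finset.insert_subset hv (by simpa using huS)
      · simp only [Finset.coe_insert, Finset.coe_singleton]
        exact SimpleGraph.isClique_pair.mpr fun _ => hadj
  have hBcard : ((S.filter fun u => G.Adj v u).image (fun u => ({v, u} : Finset V))).card
      = dg G S v := by
    rw [Finset.card_image_of_injOn, dg]
    intro u1 h1 u2 h2 he
    have hu1 : u1 ∈ ({v, u1} : Finset V) := by simp
    rw [show ({v, u1} : Finset V) = {v, u2} from he] at hu1
    rcases Finset.mem_insert.mp hu1 with h | h
    · subst h
      exact absurd (mem_filter.mp (Finset.mem_coe.mp h1)).2 (G.irrefl)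
    · exact Finset.mem_singleton.mp h
  rw [ec, ← hsplit, hA, hB, hBcard, ec]
  ring

lemma big_erase (S : Finset V) (v : V) (hv : v ∈ S) :
    big G S ≤ big G (S.erase v) + (2 ^ dg G S v - 1) := by
  have hsplit := Finset.card_filter_add_card_filter_not
    (s := S.powerset.filter fun t : Finset V => 2 ≤ t.card ∧ G.IsClique (t : Set V))
    (p := fun t : Finset V => v ∈ t)
  rw [Finset.filter_filter, Finset.filter_filter] at hsplit
  have hA : (S.powerset.filter fun t : Finset V => (2 ≤ t.card ∧ G.IsClique (t : Set V)) ∧ v ∉ t)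
      = (S.erase v).powerset.filter (fun t : Finset V => 2 ≤ t.card ∧ G.IsClique (t : Set V)) := by
    ext t
    simp only [mem_filter, mem_powerset, Finset.subset_erase]
    tauto
  have hBle : (S.powerset.filter fun t : Finset V =>
        (2 ≤ t.card ∧ G.IsClique (t : Set V)) ∧ v ∈ t).card
      ≤ ((S.filter fun u => G.Adj v u).powerset.erase ∅).card := by
    apply Finset.card_le_card_of_injOn (fun t => t.erase v)
    · intro t ht
      obtain ⟨htS, ⟨hcard, hclq⟩, hvt⟩ := by
        simpa only [Finset.mem_coe, mem_filter, mem_powerset] using ht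
      refine Finset.mem_erase.mpr ⟨?_, ?_⟩
      · intro h
        have := Finset.card_erase_of_mem hvt
        dsimp only at h
        rw [h] at this
        simp at this
        omega
      · rw [Finset.mem_powerset]
        intro u hu
        obtain ⟨huv, hut⟩ := Finset.mem_erase.mp hu
        exact mem_filter.mpr ⟨htS hut, hclq hvt hut (Ne.symm huv)⟩
    · intro t1 h1 t2 h2 he
      obtain ⟨_, _, hv1⟩ := by simpa only [Finset.mem_coe, mem_filter, mem_powerset] using h1
      obtain ⟨_, _, hv2⟩ := by simpa only [Finset.mem_coe, mem_filter, mem_powerset] using h2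
      dsimp only at he
      rw [← Finset.insert_erase hv1, ← Finset.insert_erase hv2, he]
  have hpow : ((S.filter fun u => G.Adj v u).powerset.erase ∅).card = 2 ^ dg G S v - 1 := by
    rw [Finset.card_erase_of_mem (Finset.empty_mem_powerset _), Finset.card_powerset, dg]
  rw [big, ← hsplit, hA]
  rw [hpow] at hBle
  have : big G (S.erase v) = ((S.erase v).powerset.filter
      (fun t : Finset V => 2 ≤ t.card ∧ G.IsClique (t : Set V))).card := rfl
  omega


lemma ec_empty : ec G (∅ : Finset V) = 0 := by
  simp [ec, Finset.powerset_empty, Finset.filter_singleton]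

lemma big_empty : big G (∅ : Finset V) = 0 := by
  simp [big, Finset.powerset_empty, Finset.filter_singleton]

lemma dg_in_erase (S : Finset V) (v u : V) (hv : v ∈ S) :
    dg G S u = dg G (S.erase v) u + (if G.Adj u v then 1 else 0) := by
  rw [dg, dg, Finset.filter_erase]
  split_ifs with h
  · have hm : v ∈ S.filter (fun w => G.Adj u w) := mem_filter.mpr ⟨hv, h⟩
    rw [Finset.card_erase_of_mem hm]
    have : 1 ≤ (S.filter fun w => G.Adj u w).card := Finset.card_pos.mpr ⟨v, hm⟩
    omega
  · rw [Finset.erase_eq_of_notMem (fun hm => h (mem_filter.mp hm).2)]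
    simp

lemma handshake (S : Finset V) : ∑ v ∈ S, dg G S v = 2 * ec G S := by
  induction S using Finset.strongInduction with
  | _ S ih =>
  rcases S.eq_empty_or_nonempty with rfl | ⟨v, hv⟩
  · simp [ec_empty]
  · have hrec : ec G S = ec G (S.erase v) + dg G S v := ec_erase S v hv
    have hsum : ∑ u ∈ S, dg G S u = dg G S v + ∑ u ∈ S.erase v, dg G S u :=
      (Finset.add_sum_erase S (dg G S) hv).symm
    have hterm : ∀ u ∈ S.erase v,
        dg G S u = dg G (S.erase v) u + (if G.Adj u v then 1 else 0) :=
      fun u _ => dg_in_erase S v u hv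
    have hsum2 : ∑ u ∈ S.erase v, dg G S u
        = (∑ u ∈ S.erase v, dg G (S.erase v) u)
          + ∑ u ∈ S.erase v, (if G.Adj u v then 1 else 0) := by
      rw [← Finset.sum_add_distrib]
      exact Finset.sum_congr rfl hterm
    have hbool : ∑ u ∈ S.erase v, (if G.Adj u v then 1 else 0) = dg G S v := by
      rw [Finset.sum_boole]
      simp only [Nat.cast_id]
      congr 1
      ext u
      simp only [mem_filter, Finset.mem_erase, dg]
      constructor
      · rintro ⟨⟨_, huS⟩, ha⟩
        exact ⟨huS, ha.symm⟩
      · rintro ⟨huS, ha⟩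
        exact ⟨⟨ha.ne', huS⟩, ha.symm⟩
    have hih := ih (S.erase v) (Finset.erase_ssubset hv)
    omega

lemma exists_min_deg (S : Finset V) (h : 1 ≤ ec G S) :
    ∃ v ∈ S, 1 ≤ dg G S v ∧ dg G S v * (dg G S v + 1) ≤ 2 * ec G S := by
  have hne : (S.powerset.filter fun t : Finset V =>
      t.card = 2 ∧ G.IsClique (t : Set V)).Nonempty := Finset.card_pos.mp h
  obtain ⟨t, ht⟩ := hne
  obtain ⟨hts, hcard, hclq⟩ := by simpa only [mem_filter, mem_powerset] using ht
  obtain ⟨a, b, hab, rfl⟩ := Finset.card_eq_two.mp hcard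
  have hadj : G.Adj a b := hclq (by simp) (by simp) hab
  have haS : a ∈ S := hts (by simp)
  have hbS : b ∈ S := hts (by simp)
  have hP : (S.filter fun u => 1 ≤ dg G S u).Nonempty := by
    refine ⟨a, mem_filter.mpr ⟨haS, ?_⟩⟩
    exact Finset.card_pos.mpr ⟨b, mem_filter.mpr ⟨hbS, hadj⟩⟩
  obtain ⟨v, hvP, hmin⟩ := Finset.exists_min_image _ (dg G S) hP
  obtain ⟨hvS, hv1⟩ := mem_filter.mp hvP
  refine ⟨v, hvS, hv1, ?_⟩
  set T : Finset V := insert v (S.filter fun u => G.Adj v u) with hT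
  have hTS : T ⊆ S := by
    rw [hT]
    exact Finset.insert_subset hvS (Finset.filter_subset _ _)
  have hTcard : T.card = dg G S v + 1 := by
    rw [hT, Finset.card_insert_of_notMem, dg]
    intro hmem
    exact G.irrefl (mem_filter.mp hmem).2
  have hlow : ∀ u ∈ T, dg G S v ≤ dg G S u := by
    intro u hu
    rcases Finset.mem_insert.mp hu with rfl | hu'
    · exact le_refl _
    · obtain ⟨huS, hadj'⟩ := mem_filter.mp hu'
      have : u ∈ S.filter fun w => 1 ≤ dg G S w := by
        refine mem_filter.mpr ⟨huS, ?_⟩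
        exact Finset.card_pos.mpr ⟨v, mem_filter.mpr ⟨hvS, hadj'.symm⟩⟩
      exact hmin u this
  have h1 : T.card • dg G S v ≤ ∑ u ∈ T, dg G S u := Finset.card_nsmul_le_sum T _ _ hlow
  have h2 : ∑ u ∈ T, dg G S u ≤ ∑ u ∈ S, dg G S u :=
    Finset.sum_le_sum_of_subset hTS
  rw [handshake] at h2
  have := hTcard
  have hsm : T.card • dg G S v = T.card * dg G S v := smul_eq_mul ..
  nlinarith [h1, h2]

lemma big_of_ec_zero (S : Finset V) (h : ec G S = 0) : big G S = 0 := by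
  rw [big, Finset.card_eq_zero, Finset.filter_eq_empty_iff]
  rintro t ht ⟨h2, hclq⟩
  obtain ⟨r, hrt, hr2⟩ := Finset.exists_subset_card_eq h2
  have hmem : r ∈ S.powerset.filter fun t : Finset V => t.card = 2 ∧ G.IsClique (t : Set V) := by
    refine mem_filter.mpr ⟨Finset.mem_powerset.mpr (hrt.trans (Finset.mem_powerset.mp ht)), hr2, ?_⟩
    exact hclq.subset (Finset.coe_subset.mpr hrt)
  have : 1 ≤ ec G S := Finset.card_pos.mpr ⟨r, hmem⟩
  omega


lemma two_mul_choose_two (k : ℕ) : 2 * k.choose 2 = k * (k - 1) := by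
  rcases k with _ | j
  · rfl
  · rw [Nat.choose_two_right]
    have h0 : j + 1 - 1 = j := rfl
    rw [h0]
    have h2 : 2 ∣ (j + 1) * j := by
      rw [Nat.mul_comm]
      exact (Nat.even_mul_succ_self j).two_dvd
    omega

lemma choose_two_succ (k : ℕ) : (k + 1).choose 2 = k.choose 2 + k := by
  rcases k with _ | j
  · rfl
  · rw [Nat.choose_two_right, Nat.choose_two_right]
    have h0 : j + 1 + 1 - 1 = j + 1 := rfl
    have h1 : j + 1 - 1 = j := rfl
    rw [h0, h1]
    have h2 : 2 ∣ (j + 1) * j := by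
      rw [Nat.mul_comm]
      exact (Nat.even_mul_succ_self j).two_dvd
    have h3 : (j + 1 + 1) * (j + 1) = (j + 1) * j + 2 * (j + 1) := by ring
    omega

lemma baseH : ∀ m : ℕ, ∀ S : Finset V, ec G S = m → ∀ k : ℕ, 1 ≤ k →
    k.choose 2 ≤ m → m < (k + 1).choose 2 →
    (k : ℤ) * big G S ≤ k * (2 ^ k - k - 1) + (2 ^ k - 1) * ((m : ℤ) - k.choose 2) := by
  intro m
  induction m using Nat.strong_induction_on with
  | _ m ih =>
  intro S hS k hk hk1 hk2
  rcases Nat.eq_zero_or_pos m with rfl | hm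
  · have hkk : k.choose 2 = 0 := Nat.le_zero.mp hk1
    have : k < 2 := Nat.choose_eq_zero_iff.mp hkk
    have hk1' : k = 1 := by omega
    subst hk1'
    rw [big_of_ec_zero S hS]
    norm_num
  · obtain ⟨v, hvS, hδ1, hδsum⟩ := exists_min_deg S (by omega : 1 ≤ ec G S) |>.imp
      (fun v h => by rwa [hS] at h)
    set δ := dg G S v with hδdef
    have hδk : δ + 1 ≤ k := by
      by_contra hcon
      push_neg at hcon
      have h1 : k * (k + 1) ≤ δ * (δ + 1) := Nat.mul_le_mul (by omega) (by omega)
      have h2 : 2 * (k + 1).choose 2 = (k + 1) * k := by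
        rw [two_mul_choose_two]
        rfl
      have h3 : (k + 1) * k = k * (k + 1) := Nat.mul_comm _ _
      omega
    have hrec : m = ec G (S.erase v) + δ := by rw [← hS]; exact ec_erase S v hvS
    set m' := ec G (S.erase v) with hm'def
    have hb := big_erase (G := G) S v hvS
    have hbZ : (big G S : ℤ) ≤ big G (S.erase v) + (2 ^ δ - 1) := by
      have h1 : (1 : ℕ) ≤ 2 ^ δ := Nat.one_le_two_pow
      have := (Nat.cast_le (α := ℤ)).mpr hb
      rw [Nat.cast_add, Nat.cast_sub h1] at this
      push_cast at this
      exact this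
    rcases le_or_gt (k.choose 2) m' with hcase | hcase
    · -- still in range k
      have IH := ih m' (by omega) (S.erase v) rfl k hk hcase (by omega)
      have hC : (k : ℤ) * (2 ^ δ - 1) ≤ δ * (2 ^ k - 1) := lemCZ (by omega)
      have hk0 : (0 : ℤ) ≤ (k : ℤ) := by positivity
      have h1 := mul_le_mul_of_nonneg_left hbZ hk0
      have hmm : (m : ℤ) = m' + δ := by exact_mod_cast hrec
      have hmp : ((2:ℤ) ^ k - 1) * (m : ℤ) = ((2:ℤ)^k - 1) * m' + ((2:ℤ)^k - 1) * δ := by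
        linear_combination ((2:ℤ) ^ k - 1) * hmm
      linarith [h1, IH, hC, hmp]
    · -- drop to range k - 1
      have hk2 : 2 ≤ k := by
        by_contra hcon
        push_neg at hcon
        have hk1' : k = 1 := by omega
        subst hk1'
        have : Nat.choose 1 2 = 0 := rfl
        omega
      obtain ⟨j, rfl⟩ : ∃ j, k = j + 1 := ⟨k - 1, by omega⟩
      have hchs : (j + 1).choose 2 = j.choose 2 + j := choose_two_succ j
      have hm'lb : j.choose 2 ≤ m' := by omega
      have IH := ih m' (by omega) (S.erase v) rfl j (by omega) hm'lb (by omega)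
      have hjpos : (0 : ℤ) < (j : ℤ) := by exact_mod_cast (by omega : 0 < j)
      have F3' : ((j : ℤ) + 1) * (2 ^ j - 1) ≤ (j : ℤ) * (2 * 2 ^ j - 1) := by
        have := lemCZ (Nat.le_succ j)
        push_cast [pow_succ] at this
        linarith
      have F4 : ((j : ℤ)) * (2 ^ δ - 1) ≤ (δ : ℤ) * (2 ^ j - 1) := lemCZ (by omega)
      have hc : (0 : ℤ) ≤ (m : ℤ) - ((j + 1).choose 2 : ℤ) :=
        sub_nonneg.mpr (by exact_mod_cast hk1)
      have hcA : (m : ℤ) - ((j + 1).choose 2 : ℤ)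
          = ((m' : ℤ) - (j.choose 2 : ℤ)) + (δ : ℤ) - (j : ℤ) := by
        have h1 : ((j + 1).choose 2 : ℤ) = (j.choose 2 : ℤ) + j := by exact_mod_cast hchs
        have h2 : (m : ℤ) = m' + δ := by exact_mod_cast hrec
        linarith
      have h1 := mul_le_mul_of_nonneg_left hbZ
        (by positivity : (0:ℤ) ≤ (j : ℤ) * ((j : ℤ) + 1))
      have h2 := mul_le_mul_of_nonneg_left IH (by positivity : (0:ℤ) ≤ (j : ℤ) + 1)
      have h4 := mul_le_mul_of_nonneg_left F4 (by positivity : (0:ℤ) ≤ (j : ℤ) + 1)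
      have h3 := mul_le_mul_of_nonneg_right F3' hc
      have hprod : ((j:ℤ)+1) * (2^j-1) * ((m' : ℤ) - (j.choose 2 : ℤ))
            + ((j:ℤ)+1) * (2^j-1) * (δ : ℤ)
          = ((j:ℤ)+1) * (2^j-1) * ((m : ℤ) - ((j + 1).choose 2 : ℤ))
            + ((j:ℤ)+1) * (2^j-1) * (j : ℤ) := by
        linear_combination (-(((j:ℤ)+1) * (2^j-1))) * hcA
      have main : (j:ℤ) * (((j:ℤ)+1) * (big G S : ℤ))
          ≤ (j:ℤ) * (((j:ℤ)+1) * (2 * 2^j - ((j:ℤ)+1) - 1)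
              + (2 * 2^j - 1) * ((m : ℤ) - ((j + 1).choose 2 : ℤ))) := by
        linarith [h1, h2, h3, h4, hprod]
      have hfin := le_of_mul_le_mul_left main hjpos
      have hpow : ((2:ℤ) ^ (j + 1)) = 2 * 2 ^ j := by ring
      push_cast [hpow]
      push_cast at hfin
      linarith


lemma mainM [Fintype V] (d : ℕ) (hd : 1 ≤ d)
    (hdeg : ∀ S : Finset V, S.Nonempty → ∃ v ∈ S, dg G S v ≤ d) :
    ∀ S : Finset V, d.choose 2 ≤ ec G S →
      2 * (d : ℤ) * big G S ≤
        2 * (2 ^ d - 1) * ec G S - d * (((d : ℤ) - 3) * 2 ^ d + d + 3) := by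
  intro S
  induction S using Finset.strongInduction with
  | _ S ihS =>
  intro hm
  rcases S.eq_empty_or_nonempty with rfl | hne
  · rw [ec_empty] at hm ⊢
    rw [big_empty]
    have hd1 : d = 1 := by
      by_contra hcon
      have h2 : 2 ≤ d := by omega
      have : 1 ≤ d.choose 2 := Nat.choose_pos h2
      omega
    subst hd1
    norm_num
  · obtain ⟨v, hvS, hδd⟩ := hdeg S hne
    set δ := dg G S v with hδdef
    have hrec : ec G S = ec G (S.erase v) + δ := ec_erase S v hvS
    have hb := big_erase (G := G) S v hvS
    have hbZ : (big G S : ℤ) ≤ big G (S.erase v) + (2 ^ δ - 1) := by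
      have h1 : (1 : ℕ) ≤ 2 ^ δ := Nat.one_le_two_pow
      have := (Nat.cast_le (α := ℤ)).mpr hb
      rw [Nat.cast_add, Nat.cast_sub h1] at this
      push_cast at this
      exact this
    rcases le_or_gt (d.choose 2) (ec G (S.erase v)) with hcase | hcase
    · have IH := ihS (S.erase v) (Finset.erase_ssubset hvS) hcase
      have hC : (d : ℤ) * (2 ^ δ - 1) ≤ δ * (2 ^ d - 1) := lemCZ hδd
      have h1 := mul_le_mul_of_nonneg_left hbZ (by positivity : (0:ℤ) ≤ 2 * (d : ℤ))
      have hmm : (ec G S : ℤ) = ec G (S.erase v) + δ := by exact_mod_cast hrec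
      have hmp : 2 * ((2:ℤ) ^ d - 1) * (ec G S : ℤ)
          = 2 * ((2:ℤ)^d - 1) * (ec G (S.erase v) : ℤ) + 2 * ((2:ℤ)^d - 1) * (δ : ℤ) := by
        linear_combination (2 * ((2:ℤ) ^ d - 1)) * hmm
      linarith [h1, IH, hC, hmp]
    · have hub : ec G S < (d + 1).choose 2 := by
        rw [choose_two_succ]
        omega
      have hB := baseH (ec G S) S rfl d hd hm hub
      have hch : 2 * (d.choose 2 : ℤ) = (d : ℤ) * ((d : ℤ) - 1) := by
        have := two_mul_choose_two d
        have hcast : ((2 * d.choose 2 : ℕ) : ℤ) = ((d * (d - 1) : ℕ) : ℤ) := by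
          exact_mod_cast congrArg (fun n : ℕ => (n : ℤ)) this
        push_cast [Nat.cast_sub hd] at hcast
        linarith
      have hchp : 2 * ((2:ℤ)^d - 1) * (d.choose 2 : ℤ)
          = ((2:ℤ)^d - 1) * ((d : ℤ) * ((d : ℤ) - 1)) := by
        linear_combination ((2:ℤ)^d - 1) * hch
      linarith [hB, hchp]


noncomputable def pairFinset : Sym2 V → Finset V :=
  Sym2.lift ⟨fun a b => {a, b}, fun a b => Finset.pair_comm a b⟩

@[simp] lemma pairFinset_mk (a b : V) : pairFinset (s(a, b)) = ({a, b} : Finset V) := rfl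

lemma edge_count [Fintype V] : Nat.card G.edgeSet = ec G (univ : Finset V) := by
  have h1 : Nat.card G.edgeSet = G.edgeSet.toFinset.card := by
    rw [Nat.card_coe_set_eq, Set.ncard_eq_toFinset_card']
  rw [h1, ec]
  have hi : ∀ e, e ∈ G.edgeSet.toFinset →
      pairFinset e ∈ (univ : Finset V).powerset.filter
        (fun t : Finset V => t.card = 2 ∧ G.IsClique (t : Set V)) := by
    intro e
    induction e using Sym2.ind with
    | _ a b =>
      intro he
      have hadj : G.Adj a b := by
        rw [Set.mem_toFinset] at he
        exact he
      refine mem_filter.mpr ⟨Finset.mem_powerset.mpr (Finset.subset_univ _), ?_, ?_⟩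
      · rw [pairFinset_mk]
        exact Finset.card_pair hadj.ne
      · rw [pairFinset_mk]
        simp only [Finset.coe_insert, Finset.coe_singleton]
        exact SimpleGraph.isClique_pair.mpr fun _ => hadj
  have hinj : ∀ e1 e2 : Sym2 V, pairFinset e1 = pairFinset e2 → e1 = e2 := by
    intro e1 e2
    induction e1 using Sym2.ind with
    | _ a b =>
    induction e2 using Sym2.ind with
    | _ c d =>
    intro h
    rw [pairFinset_mk, pairFinset_mk] at h
    have ha : a = c ∨ a = d := by
      have : a ∈ ({c, d} : Finset V) := by rw [← h]; simp
      simpa using this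
    have hb : b = c ∨ b = d := by
      have : b ∈ ({c, d} : Finset V) := by rw [← h]; simp
      simpa using this
    have hc : c = a ∨ c = b := by
      have : c ∈ ({a, b} : Finset V) := by rw [h]; simp
      simpa using this
    have hd : d = a ∨ d = b := by
      have : d ∈ ({a, b} : Finset V) := by rw [h]; simp
      simpa using this
    rw [Sym2.eq_iff]
    rcases ha with rfl | rfl
    · rcases hb with rfl | rfl
      · rcases hd with rfl | rfl <;> simp
      · simp
    · rcases hb with rfl | rfl
      · simp
      · rcases hc with rfl | rfl <;> simp
  apply Finset.card_bij (fun e _ => pairFinset e) (fun e he => hi e he)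
    (fun e1 he1 e2 he2 h => hinj e1 e2 h)
  · intro t ht
    obtain ⟨-, hcard, hclq⟩ := by simpa only [mem_filter, mem_powerset] using ht
    obtain ⟨a, b, hab, rfl⟩ := Finset.card_eq_two.mp hcard
    have hadj : G.Adj a b := hclq (by simp) (by simp) hab
    exact ⟨s(a, b), Set.mem_toFinset.mpr hadj, rfl⟩

lemma cliqueCount_eq [Fintype V] :
    cliqueCount G = 1 + Fintype.card V + big G (univ : Finset V) := by
  have h1 : cliqueCount G
      = ((univ : Finset (Finset V)).filter fun t : Finset V => G.IsClique (t : Set V)).card := by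
    rw [cliqueCount, Nat.card_eq_fintype_card, Fintype.card_subtype]
  have hsplit := Finset.card_filter_add_card_filter_not
    (s := (univ : Finset (Finset V)).filter fun t : Finset V => G.IsClique (t : Set V))
    (p := fun t : Finset V => 2 ≤ t.card)
  have hbig : (((univ : Finset (Finset V)).filter fun t : Finset V =>
        G.IsClique (t : Set V)).filter fun t : Finset V => 2 ≤ t.card)
      = (univ : Finset V).powerset.filter
        (fun t : Finset V => 2 ≤ t.card ∧ G.IsClique (t : Set V)) := by
    ext t
    simp only [mem_filter, mem_univ, mem_powerset, Finset.subset_univ, true_and]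
    tauto
  have hsmall : (((univ : Finset (Finset V)).filter fun t : Finset V =>
        G.IsClique (t : Set V)).filter fun t : Finset V => ¬ 2 ≤ t.card)
      = insert (∅ : Finset V) ((univ : Finset V).image fun v => ({v} : Finset V)) := by
    ext t
    simp only [mem_filter, mem_univ, true_and, Finset.mem_insert, mem_image, not_le]
    constructor
    · rintro ⟨hclq, hcard⟩
      interval_cases h : t.card
      · left
        exact Finset.card_eq_zero.mp h
      · right
        obtain ⟨a, rfl⟩ := Finset.card_eq_one.mp h
        exact ⟨a, rfl⟩
    · rintro (rfl | ⟨a, -, rfl⟩)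
      · exact ⟨by simpa using G.isClique_empty, by simp⟩
      · exact ⟨by simpa using G.isClique_singleton a, by simp⟩
  have hcard : (insert (∅ : Finset V)
      ((univ : Finset V).image fun v => ({v} : Finset V))).card = 1 + Fintype.card V := by
    have hne : (∅ : Finset V) ∉ (univ : Finset V).image fun v => ({v} : Finset V) := by
      intro hmem
      simp only [mem_image] at hmem
      obtain ⟨a, -, h⟩ := hmem
      exact Finset.singleton_ne_empty a h
    rw [Finset.card_insert_of_notMem hne,
      Finset.card_image_of_injective _ Finset.singleton_injective, Finset.card_univ]
    omega
  rw [h1, ← hsplit, hbig, hsmall, hcard, big]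
  ring

end CliqueDeg

/-- Every `d`-degenerate graph (`d ≥ 1`) with `n` vertices and `m ≥ C(d,2)`
edges has at most `n + (2^d - 1)·m/d - ((d - 3)·2^d + d + 1)/2` cliques. -/
theorem clique_count_degenerate_edges {V : Type*} [Fintype V]
    (G : SimpleGraph V) (d : ℕ) (hd : 1 ≤ d) (hdeg : IsDegenerate G d)
    (hm : d.choose 2 ≤ Nat.card G.edgeSet) :
    2 * d * (cliqueCount G : ℤ) ≤
      2 * d * Fintype.card V + 2 * (2 ^ d - 1) * Nat.card G.edgeSet -
        d * (((d : ℤ) - 3) * 2 ^ d + d + 1) := by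
  classical
  have hdeg' : ∀ S : Finset V, S.Nonempty → ∃ v ∈ S, CliqueDeg.dg G S v ≤ d := by
    intro S hS
    obtain ⟨v, hv, hc⟩ := hdeg S hS
    refine ⟨v, hv, ?_⟩
    have hset : {u ∈ (S : Set V) | G.Adj v u}
        = ((S.filter fun u => G.Adj v u : Finset V) : Set V) := by
      ext u
      simp
    rw [hset, Nat.card_coe_set_eq, Set.ncard_coe_finset] at hc
    exact hc
  have hm' : d.choose 2 ≤ CliqueDeg.ec G (univ : Finset V) := by
    rwa [CliqueDeg.edge_count] at hm
  have hmain := CliqueDeg.mainM (G := G) d hd hdeg' (univ : Finset V) hm'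
  have h1 : (cliqueCount G : ℤ) = 1 + Fintype.card V + CliqueDeg.big G (univ : Finset V) := by
    exact_mod_cast congrArg (fun n : ℕ => (n : ℤ)) (CliqueDeg.cliqueCount_eq (G := G))
  have h2 : ((Nat.card G.edgeSet : ℕ) : ℤ) = (CliqueDeg.ec G (univ : Finset V) : ℤ) := by
    exact_mod_cast congrArg (fun n : ℕ => (n : ℤ)) (CliqueDeg.edge_count (G := G))
  rw [h1, h2]
  linarith [hmain]
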